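/- Let {A_α : α ∈ Λ} be a family of pairwise disjoint Marczewski null (s₀) subsets of ℝ whose union is not Marczewski null. Then there exist disjoint sets Λ₀, Λ₁ with Λ = Λ₀ ∪ Λ₁ such that ⋃_{α∈Λ₀} A_α and ⋃_{α∈Λ₁} A_α cannot be separated by a Marczewski measurable (s) set: no s-set E satisfies ⋃_{α∈Λ₀} A_α ⊆ E and E ∩ ⋃_{α∈Λ₁} A_α = ∅. -/

import Mathlib

/-- A set is Marczewski null (`s₀`) if every nonempty perfect set contains a nonempty
perfect subset disjoint from it. -/
def MarczewskiNull (S : Set ℝ) : Prop :=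
  ∀ P : Set ℝ, Perfect P → P.Nonempty →
    ∃ Q : Set ℝ, Q ⊆ P ∧ Perfect Q ∧ Q.Nonempty ∧ Q ∩ S = ∅

/-- A set is Marczewski measurable (an `s`-set) if every nonempty perfect set has a
nonempty perfect subset contained in it or disjoint from it. -/
def MarczewskiMeasurable (S : Set ℝ) : Prop :=
  ∀ P : Set ℝ, Perfect P → P.Nonempty →
    ∃ Q : Set ℝ, Q ⊆ P ∧ Perfect Q ∧ Q.Nonempty ∧ (Q ⊆ S ∨ Q ∩ S = ∅)

set_option linter.unusedSectionVars false

namespace Stmt17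

open Set

noncomputable section

/-! ### A general Cantor-scheme ("fusion") construction -/

/-- `seg b n` is the level-`n` node along the branch `b`. -/
def seg (b : ℕ → Bool) : ℕ → List Bool
  | 0 => []
  | n + 1 => b n :: seg b n

@[simp] lemma seg_length (b : ℕ → Bool) : ∀ n, (seg b n).length = n
  | 0 => rfl
  | n + 1 => by
    show (b n :: seg b n).length = n + 1
    rw [List.length_cons, seg_length b n]

lemma seg_congr {b b' : ℕ → Bool} : ∀ n, (∀ m < n, b m = b' m) → seg b n = seg b' n
  | 0, _ => rfl
  | n + 1, h => by
    simp only [seg]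
    rw [h n (Nat.lt_succ_self n), seg_congr n (fun m hm => h m (hm.trans (Nat.lt_succ_self n)))]

lemma exists_seg : ∀ s : List Bool, ∃ b : ℕ → Bool, seg b s.length = s := by
  intro s
  induction s with
  | nil => exact ⟨fun _ => false, rfl⟩
  | cons c s ih =>
    obtain ⟨b', hb'⟩ := ih
    refine ⟨fun m => if m = s.length then c else b' m, ?_⟩
    simp only [List.length_cons, seg, if_pos rfl]
    congr 1
    rw [seg_congr s.length (fun m hm => if_neg (Nat.ne_of_lt hm))]
    exact hb'


lemma finite_lists (n : ℕ) : {s : List Bool | s.length = n}.Finite := by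
  induction n with
  | zero =>
    convert Set.finite_singleton ([] : List Bool)
    ext s; simp [List.length_eq_zero_iff]
  | succ n ih =>
    have : {s : List Bool | s.length = n + 1} ⊆
        Set.image2 List.cons Set.univ {s : List Bool | s.length = n} := by
      intro s hs
      cases s with
      | nil => exact absurd hs (by simp [Set.mem_setOf_eq])
      | cons c t =>
        have hs2 : (c :: t).length = n + 1 := hs
        have hs' : t.length = n := by simpa using hs2
        exact Set.mem_image2_of_mem (Set.mem_univ c) (hs' : t ∈ {s : List Bool | s.length = n})
    exact Set.Finite.subset (Set.Finite.image2 _ Set.finite_univ ih) this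


/-- The property of a pair of children produced at level `n` below `D`. -/
def GoodPair (Rel : ℕ → Set ℝ → Set ℝ → Prop) (n : ℕ) (D D₀ D₁ : Set ℝ) : Prop :=
  (Perfect D₀ ∧ D₀.Nonempty ∧ D₀ ⊆ D) ∧ (Perfect D₁ ∧ D₁.Nonempty ∧ D₁ ⊆ D) ∧
    Disjoint D₀ D₁ ∧ EMetric.diam D₀ ≤ 2⁻¹ ^ n ∧ EMetric.diam D₁ ≤ 2⁻¹ ^ n ∧ Rel n D₀ D₁

def IsRule (C : Set ℝ) (Rel : ℕ → Set ℝ → Set ℝ → Prop) : Prop :=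
  ∀ (n : ℕ) (D : Set ℝ), Perfect D → D.Nonempty → D ⊆ C → ∃ D₀ D₁, GoodPair Rel n D D₀ D₁

variable {C : Set ℝ} {Rel : ℕ → Set ℝ → Set ℝ → Prop}

open Classical in
def pairOf (hrule : IsRule C Rel) (n : ℕ) (D : Set ℝ) : Set ℝ × Set ℝ :=
  if h : Perfect D ∧ D.Nonempty ∧ D ⊆ C then
    ⟨(hrule n D h.1 h.2.1 h.2.2).choose, (hrule n D h.1 h.2.1 h.2.2).choose_spec.choose⟩
  else (D, D)

lemma pairOf_spec (hrule : IsRule C Rel) (n : ℕ) (D : Set ℝ)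
    (h1 : Perfect D) (h2 : D.Nonempty) (h3 : D ⊆ C) :
    GoodPair Rel n D (pairOf hrule n D).1 (pairOf hrule n D).2 := by
  have h : Perfect D ∧ D.Nonempty ∧ D ⊆ C := ⟨h1, h2, h3⟩
  simp only [pairOf, dif_pos h]
  exact (hrule n D h.1 h.2.1 h.2.2).choose_spec.choose_spec

def cell (hrule : IsRule C Rel) : List Bool → Set ℝ
  | [] => C
  | b :: s => if b then (pairOf hrule s.length (cell hrule s)).1
              else (pairOf hrule s.length (cell hrule s)).2

variable (hC : Perfect C) (hCne : C.Nonempty) (hrule : IsRule C Rel)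
include hC hCne

lemma cell_inv : ∀ s : List Bool, Perfect (cell hrule s) ∧ (cell hrule s).Nonempty ∧
    cell hrule s ⊆ C := by
  intro s
  induction s with
  | nil => exact ⟨hC, hCne, subset_rfl⟩
  | cons b s ih =>
    have hp := pairOf_spec hrule s.length (cell hrule s) ih.1 ih.2.1 ih.2.2
    cases b with
    | true =>
      simp only [cell, if_true]
      exact ⟨hp.1.1, hp.1.2.1, hp.1.2.2.trans ih.2.2⟩
    | false =>
      simp only [cell, if_false]
      exact ⟨hp.2.1.1, hp.2.1.2.1, hp.2.1.2.2.trans ih.2.2⟩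

lemma cell_pair_spec (s : List Bool) :
    GoodPair Rel s.length (cell hrule s) (cell hrule (true :: s)) (cell hrule (false :: s)) := by
  have ih := cell_inv hC hCne hrule s
  have hp := pairOf_spec hrule s.length (cell hrule s) ih.1 ih.2.1 ih.2.2
  simpa only [cell, if_true, if_false, Bool.false_eq_true, ↓reduceIte] using hp

lemma cell_subset_parent (b : Bool) (s : List Bool) :
    cell hrule (b :: s) ⊆ cell hrule s := by
  have hp := cell_pair_spec hC hCne hrule s
  cases b
  · exact hp.2.1.2.2
  · exact hp.1.2.2

lemma cell_diam (b : Bool) (s : List Bool) :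
    EMetric.diam (cell hrule (b :: s)) ≤ 2⁻¹ ^ s.length := by
  have hp := cell_pair_spec hC hCne hrule s
  cases b
  · exact hp.2.2.2.2.1
  · exact hp.2.2.2.1

lemma cell_sib_disjoint (s : List Bool) :
    Disjoint (cell hrule (true :: s)) (cell hrule (false :: s)) :=
  (cell_pair_spec hC hCne hrule s).2.2.1

lemma cell_rel (s : List Bool) :
    Rel s.length (cell hrule (true :: s)) (cell hrule (false :: s)) :=
  (cell_pair_spec hC hCne hrule s).2.2.2.2.2

lemma cell_lvl_disjoint : ∀ s t : List Bool, s.length = t.length → s ≠ t →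
    Disjoint (cell hrule s) (cell hrule t) := by
  intro s
  induction s with
  | nil => intro t hlen hne; cases t with
    | nil => exact absurd rfl hne
    | cons c t => simp at hlen
  | cons b s ih =>
    intro t hlen hne
    cases t with
    | nil => simp at hlen
    | cons c t =>
      simp only [List.length_cons, Nat.succ.injEq] at hlen
      by_cases hst : s = t
      · subst hst
        have hbc : b ≠ c := fun h => hne (by rw [h])
        cases b with
        | true =>
          cases c with
          | true => exact absurd rfl hbc
          | false => exact cell_sib_disjoint hC hCne hrule s
        | false =>
          cases c with
          | true => exact (cell_sib_disjoint hC hCne hrule s).symm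
          | false => exact absurd rfl hbc
      · exact Disjoint.mono (cell_subset_parent hC hCne hrule b s)
          (cell_subset_parent hC hCne hrule c t) (ih t hlen hst)

lemma cell_seg_succ_subset (b : ℕ → Bool) (n : ℕ) :
    cell hrule (seg b (n + 1)) ⊆ cell hrule (seg b n) :=
  cell_subset_parent hC hCne hrule (b n) (seg b n)

lemma cell_seg_diam (b : ℕ → Bool) (n : ℕ) :
    EMetric.diam (cell hrule (seg b (n + 1))) ≤ 2⁻¹ ^ n := by
  have := cell_diam hC hCne hrule (b n) (seg b n)
  rwa [seg_length] at this

lemma branch_nonempty (b : ℕ → Bool) :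
    (⋂ n, cell hrule (seg b (n + 1))).Nonempty := by
  apply IsCompact.nonempty_iInter_of_sequence_nonempty_isCompact_isClosed
  · intro n; exact cell_seg_succ_subset hC hCne hrule b (n + 1)
  · intro n; exact (cell_inv hC hCne hrule _).2.1
  · have hcl : IsClosed (cell hrule (seg b 1)) := (cell_inv hC hCne hrule _).1.closed
    have hbd : Bornology.IsBounded (cell hrule (seg b 1)) := by
      rw [Metric.isBounded_iff_ediam_ne_top]
      have := cell_seg_diam hC hCne hrule b 0
      intro htop
      replace this : Metric.ediam (cell hrule (seg b 1)) ≤ 2⁻¹ ^ 0 := this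
      rw [htop] at this
      simp at this
    exact Metric.isCompact_of_isClosed_isBounded hcl hbd
  · intro n; exact (cell_inv hC hCne hrule _).1.closed

/-- The limit set of the scheme. -/
def limitSet (hrule : IsRule C Rel) : Set ℝ :=
  {x | ∃ b : ℕ → Bool, ∀ n, x ∈ cell hrule (seg b n)}

lemma mem_limitSet_of_branch (b : ℕ → Bool) {x : ℝ}
    (hx : x ∈ ⋂ n, cell hrule (seg b (n + 1))) : x ∈ limitSet hrule := by
  refine ⟨b, fun n => ?_⟩
  cases n with
  | zero =>
    exact cell_seg_succ_subset hC hCne hrule b 0 (by exact mem_iInter.1 hx 0)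
  | succ n => exact mem_iInter.1 hx n

lemma through_cell (s : List Bool) : ∃ x, x ∈ limitSet hrule ∧ x ∈ cell hrule s := by
  obtain ⟨b, hb⟩ := exists_seg s
  obtain ⟨x, hx⟩ := branch_nonempty hC hCne hrule b
  have hall : ∀ m, x ∈ cell hrule (seg b m) := by
    intro m
    cases m with
    | zero => exact cell_seg_succ_subset hC hCne hrule b 0 (mem_iInter.1 hx 0)
    | succ m => exact mem_iInter.1 hx m
  exact ⟨x, ⟨b, hall⟩, by rw [← hb]; exact hall s.length⟩

lemma limitSet_nonempty : (limitSet hrule).Nonempty := by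
  obtain ⟨x, hx, _⟩ := through_cell hC hCne hrule []
  exact ⟨x, hx⟩

lemma limitSet_subset : limitSet hrule ⊆ C := by
  rintro x ⟨b, hb⟩
  exact (hb 0 : x ∈ cell hrule [])

lemma cell_sib_disjoint' (c : Bool) (s : List Bool) :
    Disjoint (cell hrule (c :: s)) (cell hrule ((!c) :: s)) := by
  cases c
  · exact (cell_sib_disjoint hC hCne hrule s).symm
  · exact cell_sib_disjoint hC hCne hrule s

lemma limitSet_eq_iInter :
    limitSet hrule = ⋂ n, ⋃ s ∈ {s : List Bool | s.length = n}, cell hrule s := by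
  ext x
  constructor
  · rintro ⟨b, hb⟩
    refine mem_iInter.2 fun n => ?_
    exact mem_biUnion (by simp : seg b n ∈ {s : List Bool | s.length = n}) (hb n)
  · intro hx
    have hx0 : x ∈ cell hrule [] := by
      have hx1 := mem_iInter.1 hx 0
      obtain ⟨t, ht, hxt⟩ := mem_iUnion₂.1 hx1
      have ht' : t = [] := List.length_eq_zero_iff.1 ht
      rwa [ht'] at hxt
    have key : ∀ s : List Bool, x ∈ cell hrule s → ∃ c : Bool, x ∈ cell hrule (c :: s) := by
      intro s hxs
      have hx1 := mem_iInter.1 hx (s.length + 1)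
      obtain ⟨t, ht, hxt⟩ := mem_iUnion₂.1 hx1
      cases t with
      | nil => simp at ht
      | cons c t' =>
        have hlen : t'.length = s.length := by simpa using ht
        have hts : t' = s := by
          by_contra hne2
          exact Set.disjoint_left.1 (cell_lvl_disjoint hC hCne hrule t' s hlen hne2)
            (cell_subset_parent hC hCne hrule c t' hxt) hxs
        exact ⟨c, by rwa [hts] at hxt⟩
    let u : ∀ n : ℕ, {s : List Bool // s.length = n ∧ x ∈ cell hrule s} := fun n =>
      Nat.rec ⟨[], rfl, hx0⟩ (fun n ih => ⟨(key ih.1 ih.2.2).choose :: ih.1,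
        by simp [ih.2.1], (key ih.1 ih.2.2).choose_spec⟩) n
    refine ⟨fun n => (key (u n).1 (u n).2.2).choose, fun n => ?_⟩
    have hseg : ∀ m, seg (fun k => (key (u k).1 (u k).2.2).choose) m = (u m).1 := by
      intro m
      induction m with
      | zero => rfl
      | succ m ih =>
        show (key (u m).1 (u m).2.2).choose :: seg _ m = (u (m+1)).1
        rw [ih]
    rw [hseg n]
    exact (u n).2.2

lemma limitSet_closed : IsClosed (limitSet hrule) := by
  rw [limitSet_eq_iInter hC hCne hrule]
  refine isClosed_iInter fun n => Set.Finite.isClosed_biUnion (finite_lists n)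
    (fun s _ => (cell_inv hC hCne hrule s).1.closed)

lemma limitSet_perfect : Perfect (limitSet hrule) := by
  refine ⟨limitSet_closed hC hCne hrule, ?_⟩
  intro x hx
  rw [accPt_iff_nhds]
  intro U hU
  obtain ⟨b, hb⟩ := hx
  obtain ⟨ε, hε, hball⟩ := Metric.mem_nhds_iff.1 hU
  obtain ⟨n, hn⟩ := ENNReal.exists_inv_two_pow_lt
    (a := ENNReal.ofReal ε) (ENNReal.ofReal_pos.2 hε).ne'
  obtain ⟨y, hyR, hyc⟩ := through_cell hC hCne hrule ((!(b (n+1))) :: seg b (n+1))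
  have hy' : y ∈ cell hrule (seg b (n+1)) := cell_subset_parent hC hCne hrule _ _ hyc
  have hx' : x ∈ cell hrule (seg b (n+1)) := hb (n+1)
  refine ⟨y, ⟨hball ?_, hyR⟩, fun heq => ?_⟩
  · rw [Metric.mem_ball]
    have hd : edist y x ≤ 2⁻¹ ^ n :=
      le_trans (EMetric.edist_le_diam_of_mem hy' hx') (cell_seg_diam hC hCne hrule b n)
    exact edist_lt_ofReal.1 (lt_of_le_of_lt hd hn)
  · have h1 : x ∈ cell hrule (b (n+1) :: seg b (n+1)) := hb (n+2)
    rw [heq] at hyc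
    exact Set.disjoint_left.1 (cell_sib_disjoint' hC hCne hrule (b (n+1)) (seg b (n+1)))
      h1 hyc

lemma limitSet_prop_a {x : ℝ} (hx : x ∈ limitSet hrule) (n : ℕ) :
    ∃ D₀ D₁, Rel n D₀ D₁ ∧ D₀ ⊆ C ∧ D₁ ⊆ C ∧ (x ∈ D₀ ∨ x ∈ D₁) := by
  obtain ⟨b, hb⟩ := hx
  refine ⟨cell hrule (true :: seg b n), cell hrule (false :: seg b n), ?_, ?_, ?_, ?_⟩
  · have := cell_rel hC hCne hrule (seg b n); rwa [seg_length] at this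
  · exact (cell_inv hC hCne hrule _).2.2
  · exact (cell_inv hC hCne hrule _).2.2
  · have := hb (n + 1)
    cases hbn : b n with
    | true => left; rw [show seg b (n+1) = b n :: seg b n from rfl, hbn] at this; exact this
    | false => right; rw [show seg b (n+1) = b n :: seg b n from rfl, hbn] at this; exact this

lemma limitSet_prop_b {x y : ℝ} (hx : x ∈ limitSet hrule) (hy : y ∈ limitSet hrule)
    (hne : x ≠ y) :
    ∃ (n : ℕ) (D₀ D₁ : Set ℝ), Rel n D₀ D₁ ∧ ((x ∈ D₀ ∧ y ∈ D₁) ∨ (x ∈ D₁ ∧ y ∈ D₀)) := by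
  classical
  obtain ⟨b, hb⟩ := hx
  obtain ⟨b', hb'⟩ := hy
  have hdiff : ∃ n, b n ≠ b' n := by
    by_contra h
    push_neg at h
    apply hne
    have hboth : ∀ n : ℕ, edist x y ≤ 2⁻¹ ^ n := by
      intro n
      have h1 : x ∈ cell hrule (seg b (n+1)) := hb (n+1)
      have h2 : y ∈ cell hrule (seg b (n+1)) := by
        rw [seg_congr (n+1) (fun m _ => h m)]
        exact hb' (n+1)
      exact le_trans (EMetric.edist_le_diam_of_mem h1 h2) (cell_seg_diam hC hCne hrule b n)
    have hzero : edist x y = 0 := by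
      by_contra hpos
      obtain ⟨n, hn⟩ := ENNReal.exists_inv_two_pow_lt hpos
      exact absurd (hboth n) (not_le.2 hn)
    exact edist_eq_zero.1 hzero
  set n₀ := Nat.find hdiff with hn₀
  have hne0 : b n₀ ≠ b' n₀ := Nat.find_spec hdiff
  have hmin : ∀ m < n₀, b m = b' m := fun m hm => not_not.1 (Nat.find_min hdiff hm)
  have hseq : seg b n₀ = seg b' n₀ := seg_congr n₀ hmin
  have hx1 : x ∈ cell hrule (b n₀ :: seg b n₀) := hb (n₀+1)
  have hy1 : y ∈ cell hrule (b' n₀ :: seg b n₀) := by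
    have := hb' (n₀+1)
    rwa [show seg b' (n₀+1) = b' n₀ :: seg b' n₀ from rfl, ← hseq] at this
  have hrel := cell_rel hC hCne hrule (seg b n₀)
  rw [seg_length] at hrel
  cases hbv : b n₀ with
  | true =>
    have hb'v : b' n₀ = false := by
      cases h' : b' n₀
      · rfl
      · rw [hbv, h'] at hne0; exact absurd rfl hne0
    rw [hbv] at hx1
    rw [hb'v] at hy1
    exact ⟨n₀, _, _, hrel, Or.inl ⟨hx1, hy1⟩⟩
  | false =>
    have hb'v : b' n₀ = true := by
      cases h' : b' n₀
      · rw [hbv, h'] at hne0; exact absurd rfl hne0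
      · rfl
    rw [hbv] at hx1
    rw [hb'v] at hy1
    exact ⟨n₀, _, _, hrel, Or.inr ⟨hx1, hy1⟩⟩

omit hC hCne in
theorem scheme (C : Set ℝ) (hC : Perfect C) (hCne : C.Nonempty)
    (Rel : ℕ → Set ℝ → Set ℝ → Prop) (hrule : IsRule C Rel) :
    ∃ R : Set ℝ, Perfect R ∧ R.Nonempty ∧ R ⊆ C ∧
      (∀ x ∈ R, ∀ n : ℕ, ∃ D₀ D₁, Rel n D₀ D₁ ∧ D₀ ⊆ C ∧ D₁ ⊆ C ∧ (x ∈ D₀ ∨ x ∈ D₁)) ∧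
      (∀ x ∈ R, ∀ y ∈ R, x ≠ y →
        ∃ (n : ℕ) (D₀ D₁ : Set ℝ), Rel n D₀ D₁ ∧ ((x ∈ D₀ ∧ y ∈ D₁) ∨ (x ∈ D₁ ∧ y ∈ D₀))) :=
  ⟨limitSet hrule, limitSet_perfect hC hCne hrule, limitSet_nonempty hC hCne hrule,
    limitSet_subset hC hCne hrule, fun x hx n => limitSet_prop_a hC hCne hrule hx n,
    fun x hx y hy hne => limitSet_prop_b hC hCne hrule hx hy hne⟩


end

noncomputable section

/-! ### Sets of size less than continuum can be avoided -/

lemma exists_perfect_avoiding {Z : Set ℝ} (hZ : Cardinal.mk Z < Cardinal.continuum)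
    {Q : Set ℝ} (hQ : Perfect Q) (hQne : Q.Nonempty) :
    ∃ Q', Q' ⊆ Q ∧ Perfect Q' ∧ Q'.Nonempty ∧ Q' ∩ Z = ∅ := by
  classical
  obtain ⟨f, hfr, hfc, hfi⟩ := hQ.exists_nat_bool_injection hQne
  set M : (ℕ → Bool) → Set (ℕ → Bool) := fun z => {g | ∀ n, g (2 * n) = z n} with hM
  set K : (ℕ → Bool) → Set ℝ := fun z => f '' M z with hK
  have hMclosed : ∀ z, IsClosed (M z) := by
    intro z
    have : M z = ⋂ n, (fun g : ℕ → Bool => g (2 * n)) ⁻¹' {z n} := by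
      ext g; simp [hM, Set.mem_iInter]
    rw [this]
    exact isClosed_iInter fun n =>
      (isClosed_singleton).preimage (continuous_apply (2 * n))
  have hMne : ∀ z, (M z).Nonempty := by
    intro z
    refine ⟨fun m => z (m / 2), fun n => ?_⟩
    simp [Nat.mul_div_cancel_left n (by norm_num : 0 < 2)]
  have hKcompact : ∀ z, IsCompact (K z) := fun z =>
    ((hMclosed z).isCompact).image hfc
  have hKsub : ∀ z, K z ⊆ Q := fun z => (Set.image_subset_range f _).trans hfr
  have hKne : ∀ z, (K z).Nonempty := fun z => (hMne z).image f
  have hKdisj : ∀ z z', z ≠ z' → ∀ x, x ∈ K z → x ∈ K z' → False := by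
    rintro z z' hzz x ⟨g, hg, rfl⟩ ⟨g', hg', hgg⟩
    have : g = g' := hfi hgg.symm
    subst this
    exact hzz (funext fun n => (hg n).symm.trans (hg' n))
  have hKperf : ∀ z, Perfect (K z) := by
    intro z
    refine ⟨(hKcompact z).isClosed, ?_⟩
    rintro p ⟨g, hg, rfl⟩
    rw [accPt_iff_nhds]
    intro U hU
    set gk : ℕ → (ℕ → Bool) := fun k => fun m =>
      if m % 2 = 1 ∧ k ≤ m then !(g m) else g m with hgk
    have htend : Filter.Tendsto gk Filter.atTop (nhds g) := by
      rw [tendsto_pi_nhds]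
      intro m
      apply Filter.Tendsto.congr' _ tendsto_const_nhds
      filter_upwards [Filter.eventually_ge_atTop (m + 1)] with k hk
      show g m = gk k m
      rw [hgk]
      simp only []
      rw [if_neg]
      rintro ⟨-, hkm⟩
      omega
    have htend' : Filter.Tendsto (fun k => f (gk k)) Filter.atTop (nhds (f g)) :=
      (hfc.tendsto g).comp htend
    have hev : ∀ᶠ k in Filter.atTop, f (gk k) ∈ U := htend'.eventually_mem hU
    obtain ⟨k, hk⟩ := hev.exists
    have hgkM : gk k ∈ M z := by
      intro n
      show (if (2 * n) % 2 = 1 ∧ k ≤ 2 * n then !(g (2*n)) else g (2*n)) = z n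
      rw [if_neg, hg n]
      rintro ⟨h1, -⟩
      omega
    have hgkne : gk k ≠ g := by
      intro h
      have := congrFun h (2 * k + 1)
      rw [hgk] at this
      simp only [] at this
      rw [if_pos (by constructor <;> omega)] at this
      exact (Bool.not_ne_self _) this
    exact ⟨f (gk k), ⟨hk, Set.mem_image_of_mem f hgkM⟩, fun h => hgkne (hfi h)⟩
  by_contra hcon
  have hall : ∀ z, (K z ∩ Z).Nonempty := by
    intro z
    rw [Set.nonempty_iff_ne_empty]
    intro h
    exact hcon ⟨K z, hKsub z, hKperf z, hKne z, h⟩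
  have hinj : Function.Injective (fun z => (⟨(hall z).choose, (hall z).choose_spec.2⟩ : Z)) := by
    intro z z' heq
    by_contra hzz
    exact hKdisj z z' hzz (hall z).choose (hall z).choose_spec.1
      (by rw [show (hall z).choose = (hall z').choose from congrArg Subtype.val heq]
          exact (hall z').choose_spec.1)
  have hge : Cardinal.continuum ≤ Cardinal.mk Z := by
    have h1 : Cardinal.mk (ℕ → Bool) ≤ Cardinal.mk Z := Cardinal.mk_le_of_injective hinj
    have h2 : Cardinal.mk (ℕ → Bool) = Cardinal.continuum := by
      rw [← Cardinal.power_def Bool ℕ, Cardinal.mk_bool, Cardinal.mk_nat,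
        Cardinal.two_power_aleph0]
    rwa [h2] at h1
  exact absurd hZ (not_lt.2 hge)

/-! ### There are at most continuum many perfect sets -/

lemma mk_perfect_subsets_le (R : Set ℝ) :
    Cardinal.mk {Q : Set ℝ // Perfect Q ∧ Q.Nonempty ∧ Q ⊆ R} ≤ Cardinal.continuum := by
  classical
  set code : Set ℝ → Set (ℚ × ℚ) :=
    fun S => {p | 0 < p.2 ∧ ∃ x ∈ S, |x - (p.1 : ℝ)| < (p.2 : ℝ)} with hcode
  have hrec : ∀ S : Set ℝ, IsClosed S → ∀ x : ℝ,
      (∀ n : ℕ, ∃ p ∈ code S, |x - (p.1 : ℝ)| < (p.2 : ℝ) ∧ (p.2 : ℝ) ≤ 1 / (n + 1)) ↔ x ∈ S := by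
    intro S hS x
    constructor
    · intro h
      choose p hp h1 h2 using h
      have hy : ∀ n : ℕ, ∃ y ∈ S, |y - ((p n).1 : ℝ)| < ((p n).2 : ℝ) := fun n => (hp n).2
      choose y hyS hy2 using hy
      have hxy : ∀ n : ℕ, |x - y n| ≤ 2 / (n + 1) := by
        intro n
        have : |x - y n| ≤ |x - ((p n).1 : ℝ)| + |((p n).1 : ℝ) - y n| := by
          have := abs_sub_le x ((p n).1 : ℝ) (y n); linarith [this]
        have h3 : |((p n).1 : ℝ) - y n| < ((p n).2 : ℝ) := by
          rw [abs_sub_comm]; exact hy2 n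
        have h4 : |x - ((p n).1 : ℝ)| < ((p n).2 : ℝ) := h1 n
        have h5 : ((p n).2 : ℝ) ≤ 1 / (n + 1) := h2 n
        have h6 : 2 / ((n : ℝ) + 1) = 1 / ((n : ℝ) + 1) + 1 / ((n : ℝ) + 1) := by ring
        linarith
      have htend : Filter.Tendsto y Filter.atTop (nhds x) := by
        rw [tendsto_iff_dist_tendsto_zero]
        have hb : Filter.Tendsto (fun n : ℕ => 2 / ((n : ℝ) + 1)) Filter.atTop (nhds 0) := by
          have h0 := tendsto_one_div_add_atTop_nhds_zero_nat.const_mul (2 : ℝ)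
          rw [mul_zero] at h0
          convert h0 using 2 with n
          ring
        apply squeeze_zero (fun n => dist_nonneg) _ hb
        intro n
        rw [Real.dist_eq, abs_sub_comm]
        exact hxy n
      exact hS.mem_of_tendsto htend (Filter.Eventually.of_forall hyS)
    · intro hx n
      have hpos : (0 : ℝ) < 1 / (n + 1) := by positivity
      obtain ⟨q, hq1, hq2⟩ := exists_rat_btwn (show x < x + 1 / (n + 1) by linarith)
      have hr : ∃ r : ℚ, (0 : ℚ) < r ∧ ((q : ℝ) - x) < (r : ℝ) ∧ (r : ℝ) ≤ 1 / (n + 1) := by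
        refine ⟨1 / (n + 1), by positivity, ?_, ?_⟩
        · push_cast; linarith
        · push_cast; linarith
      obtain ⟨r, hr0, hr1, hr2⟩ := hr
      refine ⟨(q, r), ⟨hr0, ⟨x, hx, ?_⟩⟩, ?_, hr2⟩
      · rw [abs_sub_comm, abs_of_pos (by linarith)]; exact hr1
      · rw [abs_sub_comm, abs_of_pos (by linarith)]; exact hr1
  have hinj : Function.Injective
      (fun Q : {Q : Set ℝ // Perfect Q ∧ Q.Nonempty ∧ Q ⊆ R} => code Q.1) := by
    intro Q Q' heq
    apply Subtype.ext
    ext x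
    rw [← hrec Q.1 Q.2.1.closed x, ← hrec Q'.1 Q'.2.1.closed x]
    simp only [heq]
  calc Cardinal.mk {Q : Set ℝ // Perfect Q ∧ Q.Nonempty ∧ Q ⊆ R}
      ≤ Cardinal.mk (Set (ℚ × ℚ)) := Cardinal.mk_le_of_injective hinj
    _ = 2 ^ Cardinal.mk (ℚ × ℚ) := Cardinal.mk_set
    _ = 2 ^ Cardinal.aleph0 := by rw [Cardinal.mk_denumerable]
    _ = Cardinal.continuum := Cardinal.two_power_aleph0

/-! ### The Bernstein decomposition -/

lemma bernstein (R M : Set ℝ)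
    (hfresh : ∀ Q, Perfect Q → Q.Nonempty → Q ⊆ R → ∀ used : Set ℝ,
      Cardinal.mk used < Cardinal.continuum → ∃ x, (x ∈ Q ∩ M) ∧ x ∉ used) :
    ∃ M₀ M₁ : Set ℝ, M₀ ⊆ M ∧ M₁ ⊆ M ∧ Disjoint M₀ M₁ ∧
      ∀ Q, Perfect Q → Q.Nonempty → Q ⊆ R → (Q ∩ M₀).Nonempty ∧ (Q ∩ M₁).Nonempty := by
  classical
  rcases isEmpty_or_nonempty {Q : Set ℝ // Perfect Q ∧ Q.Nonempty ∧ Q ⊆ R} with hQe | hQne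
  · refine ⟨∅, ∅, empty_subset _, empty_subset _, disjoint_bot_left, fun Q h1 h2 h3 => ?_⟩
    exact absurd trivial (fun _ => hQe.false ⟨Q, h1, h2, h3⟩)
  set O := (Cardinal.continuum).ord.ToType with hO
  have hOcard : Cardinal.mk O = Cardinal.continuum := by
    rw [hO, Cardinal.mk_toType, Cardinal.card_ord]
  have hle : Cardinal.mk {Q : Set ℝ // Perfect Q ∧ Q.Nonempty ∧ Q ⊆ R} ≤ Cardinal.mk O := by
    rw [hOcard]; exact mk_perfect_subsets_le R
  obtain ⟨emb⟩ := Cardinal.le_def _ _ |>.1 hle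
  set e : O → {Q : Set ℝ // Perfect Q ∧ Q.Nonempty ∧ Q ⊆ R} := Function.invFun emb with he
  have hesurj : Function.Surjective e := Function.invFun_surjective emb.injective
  have wf : WellFounded ((· < ·) : O → O → Prop) := IsWellFounded.wf
  have hpick : ∀ (o : O) (used : Set ℝ), Cardinal.mk used < Cardinal.continuum →
      ∃ p : ℝ × ℝ, ((p.1 ∈ (e o).1 ∩ M ∧ p.1 ∉ used) ∧
        (p.2 ∈ (e o).1 ∩ M ∧ p.2 ∉ used ∪ {p.1})) := by
    intro o used hused
    obtain ⟨x, hx1, hx2⟩ := hfresh (e o).1 (e o).2.1 (e o).2.2.1 (e o).2.2.2 used hused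
    have hused' : Cardinal.mk (used ∪ {x} : Set ℝ) < Cardinal.continuum := by
      apply lt_of_le_of_lt (Cardinal.mk_union_le _ _)
      apply Cardinal.add_lt_of_lt Cardinal.aleph0_le_continuum hused
      rw [Cardinal.mk_singleton]
      exact lt_of_lt_of_le Cardinal.one_lt_aleph0 Cardinal.aleph0_le_continuum
    obtain ⟨y, hy1, hy2⟩ := hfresh (e o).1 (e o).2.1 (e o).2.2.1 (e o).2.2.2 _ hused'
    exact ⟨(x, y), ⟨hx1, hx2⟩, hy1, hy2⟩
  set usedOf : ∀ o : O, (∀ o', o' < o → ℝ × ℝ) → Set ℝ :=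
    fun o ih => {z | ∃ o', ∃ h : o' < o, z = (ih o' h).1 ∨ z = (ih o' h).2} with husedOf
  have husedcard : ∀ o ih, Cardinal.mk (usedOf o ih) < Cardinal.continuum := by
    intro o ih
    have hsub : usedOf o ih ⊆ Set.range (fun q : ({o' // o' < o} × Bool) =>
        if q.2 then (ih q.1.1 q.1.2).1 else (ih q.1.1 q.1.2).2) := by
      rintro z ⟨o', h, hz | hz⟩
      · exact ⟨(⟨o', h⟩, true), hz.symm⟩
      · exact ⟨(⟨o', h⟩, false), hz.symm⟩
    calc Cardinal.mk (usedOf o ih) ≤ Cardinal.mk ({o' // o' < o} × Bool) :=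
          le_trans (Cardinal.mk_le_mk_of_subset hsub) Cardinal.mk_range_le
      _ < Cardinal.continuum := by
          rw [Cardinal.mk_prod, Cardinal.mk_bool]
          simp only [Cardinal.lift_id]
          apply Cardinal.mul_lt_of_lt Cardinal.aleph0_le_continuum
          · exact Cardinal.mk_Iio_ord_toType o
          · exact lt_of_lt_of_le (Cardinal.nat_lt_aleph0 2) Cardinal.aleph0_le_continuum
  set g : O → ℝ × ℝ :=
    wf.fix (fun o ih => (hpick o (usedOf o ih) (husedcard o ih)).choose) with hg
  have hgeq : ∀ o, g o =
      (hpick o (usedOf o (fun o' _ => g o')) (husedcard o (fun o' _ => g o'))).choose := by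
    intro o
    rw [hg]
    exact wf.fix_eq _ o
  set prevSet : O → Set ℝ :=
    fun o => {z | ∃ o', ∃ _ : o' < o, z = (g o').1 ∨ z = (g o').2} with hprevSet
  have hspec : ∀ o, ((g o).1 ∈ (e o).1 ∩ M ∧ (g o).1 ∉ prevSet o) ∧
      ((g o).2 ∈ (e o).1 ∩ M ∧ (g o).2 ∉ prevSet o ∪ {(g o).1}) := by
    intro o
    have h := (hpick o (usedOf o (fun o' _ => g o')) (husedcard o (fun o' _ => g o'))).choose_spec
    rw [← hgeq o] at h
    exact h
  have hd : ∀ o o' : O, (g o).1 ≠ (g o').2 := by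
    intro o o'
    rcases lt_trichotomy o o' with h | h | h
    · intro heq
      exact (hspec o').2.2 (Set.mem_union_left _ ⟨o, h, Or.inl heq.symm⟩)
    · subst h
      intro heq
      exact (hspec o).2.2 (Set.mem_union_right _ (by rw [← heq]; exact rfl))
    · intro heq
      exact (hspec o).1.2 ⟨o', h, Or.inr heq⟩
  refine ⟨{z | ∃ o, z = (g o).1}, {z | ∃ o, z = (g o).2}, ?_, ?_, ?_, ?_⟩
  · rintro z ⟨o, rfl⟩; exact (hspec o).1.1.2
  · rintro z ⟨o, rfl⟩; exact (hspec o).2.1.2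
  · rw [Set.disjoint_left]
    rintro z ⟨o, rfl⟩ ⟨o', heq⟩
    exact hd o o' heq
  · intro Q h1 h2 h3
    obtain ⟨o, ho⟩ := hesurj ⟨Q, h1, h2, h3⟩
    have heQ : (e o).1 = Q := by rw [ho]
    constructor
    · exact ⟨(g o).1, by rw [← heQ]; exact (hspec o).1.1.1, ⟨o, rfl⟩⟩
    · exact ⟨(g o).2, by rw [← heQ]; exact (hspec o).2.1.1, ⟨o, rfl⟩⟩


end

end Stmt17

open scoped ENNReal in
theorem stmt17 {Λ : Type*} (A : Λ → Set ℝ)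
    (hdisj : Pairwise (Function.onFun Disjoint A))
    (hnull : ∀ α, MarczewskiNull (A α))
    (hU : ¬ MarczewskiNull (⋃ α, A α)) :
    ∃ Λ₀ Λ₁ : Set Λ, Disjoint Λ₀ Λ₁ ∧ Λ₀ ∪ Λ₁ = Set.univ ∧
      ¬ ∃ E : Set ℝ, MarczewskiMeasurable E ∧
        (⋃ α ∈ Λ₀, A α) ⊆ E ∧ E ∩ (⋃ α ∈ Λ₁, A α) = ∅ := by
  classical
  by_contra hcon
  push_neg at hcon
  have hsep : ∀ X : Set Λ, ∃ E : Set ℝ, MarczewskiMeasurable E ∧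
      (⋃ α ∈ X, A α) ⊆ E ∧ E ∩ (⋃ α ∈ Xᶜ, A α) = ∅ :=
    fun X => hcon X Xᶜ disjoint_compl_right (Set.union_compl_self X)
  rw [MarczewskiNull] at hU
  push_neg at hU
  obtain ⟨P, hP, hPne, hPbad⟩ := hU
  have hbase : ∀ Q : Set ℝ, Perfect Q → Q.Nonempty → Q ⊆ P → ∃ α, (Q ∩ A α).Nonempty := by
    intro Q h1 h2 h3
    obtain ⟨x, hxQ, hxU⟩ := hPbad Q h3 h1 h2
    obtain ⟨α, hα⟩ := Set.mem_iUnion.1 hxU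
    exact ⟨α, ⟨x, hxQ, hα⟩⟩
  by_cases hF : ∃ C : Set ℝ, Perfect C ∧ C.Nonempty ∧ C ⊆ P ∧
      ∀ Q Q' : Set ℝ, Perfect Q → Q.Nonempty → Q ⊆ C → Perfect Q' → Q'.Nonempty → Q' ⊆ C →
        ∃ α, (Q ∩ A α).Nonempty ∧ (Q' ∩ A α).Nonempty
  -- ### Case 1: some perfect `C ⊆ P` is "linked": any two perfect subsets share an index.
  · obtain ⟨C, hC, hCne, hCP, hlink⟩ := hF
    have hdich : ∀ (Y : Set Λ) (D : Set ℝ), Perfect D → D.Nonempty →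
        ∃ D', D' ⊆ D ∧ Perfect D' ∧ D'.Nonempty ∧
          ((∀ α, (D' ∩ A α).Nonempty → α ∈ Y) ∨ (∀ α, (D' ∩ A α).Nonempty → α ∉ Y)) := by
      intro Y D hD hDne
      obtain ⟨E, hE, hE1, hE2⟩ := hsep Y
      obtain ⟨Q, hQsub, hQperf, hQne, hcase⟩ := hE D hD hDne
      refine ⟨Q, hQsub, hQperf, hQne, ?_⟩
      cases hcase with
      | inl hQE =>
        left
        rintro α ⟨x, hxQ, hxA⟩
        by_contra hαY
        have hx1 : x ∈ ⋃ β ∈ Yᶜ, A β := Set.mem_biUnion hαY hxA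
        have hx2 : (x : ℝ) ∈ E := hQE hxQ
        have hmem : x ∈ E ∩ ⋃ β ∈ Yᶜ, A β := ⟨hx2, hx1⟩
        rw [hE2] at hmem
        exact hmem
      | inr hQE =>
        right
        rintro α ⟨x, hxQ, hxA⟩ hαY
        have hx1 : (x : ℝ) ∈ E := hE1 (Set.mem_biUnion hαY hxA)
        have hmem : x ∈ Q ∩ E := ⟨hxQ, hx1⟩
        rw [hQE] at hmem
        exact hmem
    set Good : Set Λ → Prop := fun Y => ∀ D : Set ℝ, Perfect D → D.Nonempty → D ⊆ C →
      ∃ D', D' ⊆ D ∧ Perfect D' ∧ D'.Nonempty ∧ ∀ α, (D' ∩ A α).Nonempty → α ∈ Y with hGoodDef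
    have hGood : ∀ Y : Set Λ, Good Y ∨ Good Yᶜ := by
      intro Y
      by_contra hng
      push_neg at hng
      obtain ⟨hnY, hnYc⟩ := hng
      have hwit : ∀ Y' : Set Λ, ¬ Good Y' → ∃ D : Set ℝ, Perfect D ∧ D.Nonempty ∧ D ⊆ C ∧
          ∀ D', D' ⊆ D → Perfect D' → D'.Nonempty → ∃ α, (D' ∩ A α).Nonempty ∧ α ∉ Y' := by
        intro Y' hnG
        simp only [hGoodDef] at hnG
        push_neg at hnG
        obtain ⟨D, h1, h2, h3, h4⟩ := hnG
        exact ⟨D, h1, h2, h3, h4⟩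
      obtain ⟨D₁, hD₁p, hD₁ne, hD₁C, hD₁bad⟩ := hwit Y hnY
      obtain ⟨D₂, hD₂p, hD₂ne, hD₂C, hD₂bad⟩ := hwit Yᶜ hnYc
      obtain ⟨Q₁, hQ₁s, hQ₁p, hQ₁ne, hQ₁or⟩ := hdich Y D₁ hD₁p hD₁ne
      have hQ₁ : ∀ α, (Q₁ ∩ A α).Nonempty → α ∉ Y := by
        cases hQ₁or with
        | inl h =>
          obtain ⟨α, hα1, hα2⟩ := hD₁bad Q₁ hQ₁s hQ₁p hQ₁ne
          exact absurd (h α hα1) hα2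
        | inr h => exact h
      obtain ⟨Q₂, hQ₂s, hQ₂p, hQ₂ne, hQ₂or⟩ := hdich Y D₂ hD₂p hD₂ne
      have hQ₂ : ∀ α, (Q₂ ∩ A α).Nonempty → α ∈ Y := by
        cases hQ₂or with
        | inl h => exact h
        | inr h =>
          obtain ⟨α, hα1, hα2⟩ := hD₂bad Q₂ hQ₂s hQ₂p hQ₂ne
          rw [Set.notMem_compl_iff] at hα2
          exact absurd hα2 (h α hα1)
      obtain ⟨α, hα1, hα2⟩ := hlink Q₂ Q₁ hQ₂p hQ₂ne (hQ₂s.trans hD₂C) hQ₁p hQ₁ne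
        (hQ₁s.trans hD₁C)
      exact hQ₁ α hα2 (hQ₂ α hα1)
    obtain ⟨j⟩ : Nonempty (ℝ ↪ (ℕ → Bool)) := by
      rw [← Cardinal.le_def, Cardinal.mk_real, ← Cardinal.power_def Bool ℕ, Cardinal.mk_bool,
        Cardinal.mk_nat, Cardinal.two_power_aleph0]
    set pt : Λ → ℝ := fun α => if h : (C ∩ A α).Nonempty then h.choose else 0 with hpt
    have hptA : ∀ α (h : (C ∩ A α).Nonempty), pt α ∈ C ∩ A α := by
      intro α h
      rw [hpt]
      simp only [dif_pos h]
      exact h.choose_spec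
    have hptinj : ∀ α β, (C ∩ A α).Nonempty → (C ∩ A β).Nonempty → pt α = pt β → α = β := by
      intro α β hα hβ heq
      by_contra hne
      have h1 := (hptA α hα).2
      have h2 := (hptA β hβ).2
      rw [heq] at h1
      exact Set.disjoint_left.1 (hdisj hne) h1 h2
    set F : Λ → ℕ → Bool := fun α => j (pt α) with hFdef
    set Zs : ℕ → Set Λ := fun n => if Good {α | F α n = true} then {α | F α n = true}
      else {α | F α n = true}ᶜ with hZs
    have hZgood : ∀ n, Good (Zs n) := by
      intro n
      simp only [hZs]
      split_ifs with h
      · exact h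
      · cases hGood {α | F α n = true} with
        | inl h' => exact absurd h' h
        | inr h' => exact h'
    have hZdet : ∀ (n : ℕ) (α β : Λ), α ∈ Zs n → β ∈ Zs n → F α n = F β n := by
      intro n α β hα hβ
      simp only [hZs] at hα hβ
      split_ifs at hα hβ with h
      · rw [Set.mem_setOf_eq] at hα hβ
        rw [hα, hβ]
      · rw [Set.mem_compl_iff, Set.mem_setOf_eq, Bool.not_eq_true] at hα hβ
        rw [hα, hβ]
    have hchain : ∀ (m : ℕ) (D : Set ℝ), Perfect D → D.Nonempty → D ⊆ C →
        ∃ D', D' ⊆ D ∧ Perfect D' ∧ D'.Nonempty ∧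
          ∀ k ≤ m, ∀ α, (D' ∩ A α).Nonempty → α ∈ Zs k := by
      intro m
      induction m with
      | zero =>
        intro D h1 h2 h3
        obtain ⟨D', hs, hp, hn, hin⟩ := hZgood 0 D h1 h2 h3
        refine ⟨D', hs, hp, hn, ?_⟩
        intro k hk α hα
        have hk0 : k = 0 := Nat.le_zero.1 hk
        subst hk0
        exact hin α hα
      | succ m ih =>
        intro D h1 h2 h3
        obtain ⟨D', hs, hp, hn, hall⟩ := ih D h1 h2 h3
        obtain ⟨D'', hs', hp', hn', hin⟩ := hZgood (m+1) D' hp hn (hs.trans h3)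
        refine ⟨D'', hs'.trans hs, hp', hn', ?_⟩
        intro k hk α hα
        rcases eq_or_lt_of_le hk with hkk | hkk
        · subst hkk
          exact hin α hα
        · exact hall k (Nat.lt_succ_iff.1 hkk) α ⟨hα.choose, hs' hα.choose_spec.1,
            hα.choose_spec.2⟩
    set RelF : ℕ → Set ℝ → Set ℝ → Prop := fun n D₀ D₁ =>
      (∀ α, (D₀ ∩ A α).Nonempty → α ∈ Zs n) ∧ (∀ α, (D₁ ∩ A α).Nonempty → α ∈ Zs n) with hRelF
    have hruleF : Stmt17.IsRule C RelF := by
      intro n D hD hDne hDC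
      obtain ⟨E₀, E₁, ⟨he₀p, he₀n, he₀s, he₀d⟩, ⟨he₁p, he₁n, he₁s, he₁d⟩, hdisj'⟩ :=
        hD.small_diam_splitting hDne
          (show (0:ℝ≥0∞) < 2⁻¹ ^ n from
            ENNReal.pow_pos (ENNReal.inv_pos.2 ENNReal.ofNat_ne_top) n)
      obtain ⟨D₀, h₀s, h₀p, h₀n, h₀in⟩ := hchain n E₀ he₀p he₀n (he₀s.trans hDC)
      obtain ⟨D₁, h₁s, h₁p, h₁n, h₁in⟩ := hchain n E₁ he₁p he₁n (he₁s.trans hDC)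
      refine ⟨D₀, D₁, ⟨h₀p, h₀n, h₀s.trans he₀s⟩, ⟨h₁p, h₁n, h₁s.trans he₁s⟩,
        hdisj'.mono h₀s h₁s, le_trans (EMetric.diam_mono h₀s) he₀d,
        le_trans (EMetric.diam_mono h₁s) he₁d, ?_, ?_⟩
      · exact fun α hα => h₀in n le_rfl α hα
      · exact fun α hα => h₁in n le_rfl α hα
    obtain ⟨R, hRp, hRne, hRC, hRa, -⟩ := Stmt17.scheme C hC hCne RelF hruleF
    have hSR : ∀ α, (R ∩ A α).Nonempty → ∀ n, α ∈ Zs n := by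
      rintro α ⟨x, hxR, hxA⟩ n
      obtain ⟨D₀, D₁, hrel, -, -, hor⟩ := hRa x hxR n
      cases hor with
      | inl h => exact hrel.1 α ⟨x, h, hxA⟩
      | inr h => exact hrel.2 α ⟨x, h, hxA⟩
    obtain ⟨α₀, hα₀⟩ := hbase R hRp hRne (hRC.trans hCP)
    have hsingle : ∀ β, (R ∩ A β).Nonempty → β = α₀ := by
      intro β hβ
      have hFeq : F β = F α₀ := funext fun n => hZdet n β α₀ (hSR β hβ n) (hSR α₀ hα₀ n)
      have hCβ : (C ∩ A β).Nonempty := ⟨hβ.choose, hRC hβ.choose_spec.1, hβ.choose_spec.2⟩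
      have hCα₀ : (C ∩ A α₀).Nonempty := ⟨hα₀.choose, hRC hα₀.choose_spec.1, hα₀.choose_spec.2⟩
      apply hptinj β α₀ hCβ hCα₀
      apply j.injective
      exact hFeq
    obtain ⟨R', hR's, hR'p, hR'ne, hR'avoid⟩ := hnull α₀ R hRp hRne
    obtain ⟨β, hβ⟩ := hbase R' hR'p hR'ne (hR's.trans (hRC.trans hCP))
    have hβR : (R ∩ A β).Nonempty := ⟨hβ.choose, hR's hβ.choose_spec.1, hβ.choose_spec.2⟩
    have hβα := hsingle β hβR
    subst hβα
    rw [hR'avoid] at hβ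
    exact Set.not_nonempty_empty hβ
  -- ### Case 2: below every perfect subset of `P` there are two perfect sets with
  -- disjoint index sets; build a transversal perfect set and a Bernstein partition.
  · push_neg at hF
    have hrad : ∀ ε : ℝ≥0∞, 0 < ε → ∃ δ : ℝ, 0 < δ ∧ ENNReal.ofReal (2 * δ) ≤ ε := by
      intro ε hε
      rcases eq_or_ne ε ⊤ with rfl | hne
      · exact ⟨1, one_pos, le_top⟩
      · have hpos : 0 < ε.toReal := ENNReal.toReal_pos hε.ne' hne
        refine ⟨ε.toReal / 4, by linarith, ?_⟩
        have h24 : 2 * (ε.toReal / 4) ≤ ε.toReal := by linarith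
        calc ENNReal.ofReal (2 * (ε.toReal / 4)) ≤ ENNReal.ofReal ε.toReal :=
              ENNReal.ofReal_le_ofReal h24
          _ = ε := ENNReal.ofReal_toReal hne
    have hportion : ∀ (Q : Set ℝ), Perfect Q → ∀ x ∈ Q, ∀ δ : ℝ, 0 < δ →
        ∃ D, D ⊆ Q ∧ Perfect D ∧ D.Nonempty ∧ D ⊆ Metric.closedBall x δ ∧
          EMetric.diam D ≤ ENNReal.ofReal (2 * δ) := by
      intro Q hQ x hx δ hδ
      have h1 := hQ.closure_nhds_inter x hx (Metric.mem_ball_self hδ) Metric.isOpen_ball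
      have hsubcb : closure (Metric.ball x δ ∩ Q) ⊆ Metric.closedBall x δ :=
        (closure_mono Set.inter_subset_left).trans Metric.closure_ball_subset_closedBall
      refine ⟨closure (Metric.ball x δ ∩ Q), ?_, h1.1, h1.2, hsubcb, ?_⟩
      · rw [IsClosed.closure_subset_iff hQ.closed]
        exact Set.inter_subset_right
      · apply le_trans (EMetric.diam_mono hsubcb)
        apply EMetric.diam_le
        intro a ha b hb
        rw [edist_dist]
        apply ENNReal.ofReal_le_ofReal
        calc dist a b ≤ dist a x + dist x b := dist_triangle a x b
          _ ≤ δ + δ := add_le_add (Metric.mem_closedBall.1 ha)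
              (by rw [dist_comm]; exact Metric.mem_closedBall.1 hb)
          _ = 2 * δ := by ring
    set RelT : ℕ → Set ℝ → Set ℝ → Prop := fun _ D₀ D₁ =>
      ∀ α, (D₀ ∩ A α).Nonempty → ¬(D₁ ∩ A α).Nonempty with hRelT
    have hruleT : Stmt17.IsRule P RelT := by
      intro n D hD hDne hDP
      obtain ⟨Q, Q', hQp, hQne, hQD, hQ'p, hQ'ne, hQ'D, hQQ'⟩ := hF D hD hDne hDP
      have hnsub : ¬ Q ⊆ Q' := by
        intro hsub
        obtain ⟨α, hα⟩ := hbase Q hQp hQne (hQD.trans hDP)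
        have h0 := hQQ' α hα
        have h1 : (Q' ∩ A α).Nonempty := ⟨hα.choose, hsub hα.choose_spec.1, hα.choose_spec.2⟩
        rw [h0] at h1
        exact Set.not_nonempty_empty h1
      obtain ⟨x, hxQ, hxQ'⟩ := Set.not_subset.1 hnsub
      obtain ⟨r, hr, hball⟩ : ∃ r : ℝ, 0 < r ∧ Metric.closedBall x r ∩ Q' = ∅ := by
        have hnm : Q'ᶜ ∈ nhds x := hQ'p.closed.isOpen_compl.mem_nhds hxQ'
        obtain ⟨r₀, hr₀, hsub⟩ := Metric.mem_nhds_iff.1 hnm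
        refine ⟨r₀ / 2, by linarith, ?_⟩
        rw [Set.eq_empty_iff_forall_notMem]
        rintro z ⟨hz1, hz2⟩
        exact hsub (Metric.mem_ball.2
          (lt_of_le_of_lt (Metric.mem_closedBall.1 hz1) (by linarith))) hz2
      obtain ⟨δ₀, hδ₀, hδ₀le⟩ := hrad (2⁻¹ ^ n)
        (ENNReal.pow_pos (ENNReal.inv_pos.2 ENNReal.ofNat_ne_top) n)
      have hδpos : 0 < min δ₀ r := lt_min hδ₀ hr
      obtain ⟨D₀, hD₀s, hD₀p, hD₀ne, hD₀ball, hD₀diam⟩ := hportion Q hQp x hxQ _ hδpos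
      obtain ⟨y, hyQ'⟩ := hQ'ne
      obtain ⟨D₁, hD₁s, hD₁p, hD₁ne, hD₁ball, hD₁diam⟩ := hportion Q' hQ'p y hyQ' δ₀ hδ₀
      refine ⟨D₀, D₁, ⟨hD₀p, hD₀ne, hD₀s.trans hQD⟩, ⟨hD₁p, hD₁ne, hD₁s.trans hQ'D⟩,
        ?_, ?_, ?_, ?_⟩
      · rw [Set.disjoint_left]
        intro z hz0 hz1
        have hz2 : z ∈ Metric.closedBall x r :=
          Metric.closedBall_subset_closedBall (min_le_right _ _) (hD₀ball hz0)
        have hmem : z ∈ Metric.closedBall x r ∩ Q' := ⟨hz2, hD₁s hz1⟩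
        rw [hball] at hmem
        exact hmem
      · refine le_trans hD₀diam (le_trans (ENNReal.ofReal_le_ofReal ?_) hδ₀le)
        have := min_le_left δ₀ r
        linarith
      · exact le_trans hD₁diam hδ₀le
      · intro α hα0 hα1
        have h0 := hQQ' α ⟨hα0.choose, hD₀s hα0.choose_spec.1, hα0.choose_spec.2⟩
        have h1 : (Q' ∩ A α).Nonempty := ⟨hα1.choose, hD₁s hα1.choose_spec.1, hα1.choose_spec.2⟩
        rw [h0] at h1
        exact Set.not_nonempty_empty h1
    obtain ⟨R, hRp, hRne, hRP, -, hRb⟩ := Stmt17.scheme P hP hPne RelT hruleT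
    have htrans : ∀ x, x ∈ R → ∀ y, y ∈ R → x ≠ y → ∀ α, x ∈ A α → y ∈ A α → False := by
      intro x hx y hy hne α hxA hyA
      obtain ⟨n, D₀, D₁, hrel, hor⟩ := hRb x hx y hy hne
      cases hor with
      | inl h => exact hrel α ⟨x, h.1, hxA⟩ ⟨y, h.2, hyA⟩
      | inr h => exact hrel α ⟨y, h.2, hyA⟩ ⟨x, h.1, hxA⟩
    have hfresh : ∀ Q, Perfect Q → Q.Nonempty → Q ⊆ R → ∀ used : Set ℝ,
        Cardinal.mk used < Cardinal.continuum →
        ∃ x, (x ∈ Q ∩ (R ∩ ⋃ α, A α)) ∧ x ∉ used := by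
      intro Q h1 h2 h3 used hused
      obtain ⟨Q', hs, hp, hn, hempty⟩ := Stmt17.exists_perfect_avoiding hused h1 h2
      obtain ⟨x, hxQ', hxU⟩ := hPbad Q' ((hs.trans h3).trans hRP) hp hn
      refine ⟨x, ⟨hs hxQ', h3 (hs hxQ'), hxU⟩, fun hxused => ?_⟩
      have hmem : x ∈ Q' ∩ used := ⟨hxQ', hxused⟩
      rw [hempty] at hmem
      exact hmem
    obtain ⟨M₀, M₁, hM₀, hM₁, hMdisj, hMall⟩ := Stmt17.bernstein R (R ∩ ⋃ α, A α) hfresh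
    set X : Set Λ := {α | (A α ∩ M₀).Nonempty} with hX
    obtain ⟨E, hE, hE1, hE2⟩ := hsep X
    obtain ⟨Q, hQs, hQp, hQne, hQcase⟩ := hE R hRp hRne
    obtain ⟨hQM₀, hQM₁⟩ := hMall Q hQp hQne hQs
    cases hQcase with
    | inl hQE =>
      obtain ⟨y, hyQ, hyM₁⟩ := hQM₁
      obtain ⟨hyR, hyU⟩ := hM₁ hyM₁
      obtain ⟨β, hβ⟩ := Set.mem_iUnion.1 hyU
      have hβX : β ∉ X := by
        rintro ⟨z, hzA, hzM₀⟩
        obtain ⟨hzR, -⟩ := hM₀ hzM₀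
        have hzy : z ≠ y := by
          intro heq
          exact Set.disjoint_left.1 hMdisj hzM₀ (heq ▸ hyM₁)
        exact htrans z hzR y hyR hzy β hzA hβ
      have hy1 : y ∈ E := hQE hyQ
      have hy2 : y ∈ ⋃ α ∈ Xᶜ, A α := Set.mem_biUnion hβX hβ
      have hmem : y ∈ E ∩ ⋃ α ∈ Xᶜ, A α := ⟨hy1, hy2⟩
      rw [hE2] at hmem
      exact hmem
    | inr hQE =>
      obtain ⟨x, hxQ, hxM₀⟩ := hQM₀
      obtain ⟨hxR, hxU⟩ := hM₀ hxM₀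
      obtain ⟨γ, hγ⟩ := Set.mem_iUnion.1 hxU
      have hγX : γ ∈ X := ⟨x, hγ, hxM₀⟩
      have hx1 : x ∈ E := hE1 (Set.mem_biUnion hγX hγ)
      have hmem : x ∈ Q ∩ E := ⟨hxQ, hx1⟩
      rw [hQE] at hmem
      exact hmem
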